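/- Let A be a T-brace and let a ∈ ζ₂(⋆,A) be an element of infinite additive order. Suppose that the torsion subgroup of the additive group of ζ(⋆,A) is a p-group for some prime p. Then a ⋆ a has additive order at most p; in particular p·(a ⋆ a) = 0. -/

import Mathlib

/-!
Basic theory of left braces (skew left braces of abelian type), following
Dixon–Kurdachenko–Subbotin, "On the structure of braces whose subideals are ideals".
-/

universe u v

/-- A left brace: an abelian group `(A,+)`, a group `(A,·)`, satisfying
`a(b+c) = ab + ac - a`.  (The additive and multiplicative identities then coincide.) -/
class LeftBrace (A : Type u) extends AddCommGroup A, Group A where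
  mul_add_eq : ∀ a b c : A, a * (b + c) = a * b + a * c - a

namespace LeftBrace

variable {A : Type u} [LeftBrace A]

/-- The star operation `a ⋆ b = ab - a - b`. -/
def bstar (a b : A) : A := a * b - a - b

/-- A subset of a left brace is a subbrace if it is closed under the additive-group
and multiplicative-group operations (equivalently, it is a left brace under the
restricted operations). -/
structure IsSubbrace (S : Set A) : Prop where
  zero_mem : (0 : A) ∈ S
  add_mem : ∀ {a b : A}, a ∈ S → b ∈ S → a + b ∈ S
  neg_mem : ∀ {a : A}, a ∈ S → -a ∈ S
  mul_mem : ∀ {a b : A}, a ∈ S → b ∈ S → a * b ∈ S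
  inv_mem : ∀ {a : A}, a ∈ S → a⁻¹ ∈ S

/-- `I` is an ideal of the subbrace `J`: `I ⊆ J`, both are subbraces, and
`a ⋆ z, z ⋆ a ∈ I` for all `a ∈ J`, `z ∈ I`. -/
structure IsIdealIn (I J : Set A) : Prop where
  subset : I ⊆ J
  subbrace : IsSubbrace I
  ambient_subbrace : IsSubbrace J
  star_mem_left : ∀ a ∈ J, ∀ z ∈ I, bstar a z ∈ I
  star_mem_right : ∀ a ∈ J, ∀ z ∈ I, bstar z a ∈ I

/-- `I` is an ideal of the brace `A`. -/
def IsIdeal (I : Set A) : Prop := IsIdealIn I (Set.univ : Set A)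

/-- `A` is a T-brace if being an ideal is a transitive relation: an ideal of an
ideal of `A` is an ideal of `A`. -/
def IsTBrace (A : Type u) [LeftBrace A] : Prop :=
  ∀ I J : Set A, IsIdealIn I J → IsIdeal J → IsIdeal I

/-- The `⋆`-center `ζ(⋆,A) = {a | a ⋆ x = x ⋆ a = 0 for all x}`. -/
def starCenter (A : Type u) [LeftBrace A] : Set A :=
  {a : A | ∀ x : A, bstar a x = 0 ∧ bstar x a = 0}

/-- The preimage in `A` of the `⋆`-center of the quotient of `A` by (the ideal) `S`:
`a` belongs to it iff `a ⋆ x ∈ S` and `x ⋆ a ∈ S` for every `x ∈ A`. -/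
def nextCenter (A : Type u) [LeftBrace A] (S : Set A) : Set A :=
  {a : A | ∀ x : A, bstar a x ∈ S ∧ bstar x a ∈ S}

/-- The upper `⋆`-central series, indexed by naturals:
`ζ₀(⋆,A) = 0` and `ζ_{n+1}(⋆,A)/ζ_n(⋆,A) = ζ(⋆, A/ζ_n(⋆,A))`. -/
def zetaNat (A : Type u) [LeftBrace A] : ℕ → Set A
  | 0 => ({0} : Set A)
  | n + 1 => nextCenter A (zetaNat A n)

/-- The upper `⋆`-central series, indexed by ordinals (unions at limit ordinals). -/
noncomputable def zetaOrd (A : Type u) [LeftBrace A] (o : Ordinal.{v}) : Set A :=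
  Ordinal.limitRecOn o (({0} : Set A))
    (fun _ ih => nextCenter A ih)
    (fun o _ ih => ⋃ (o' : Ordinal) (h : o' < o), ih o' h)

/-- The upper `⋆`-hypercenter `ζ_∞(⋆,A)`: the final (stable) term of the upper
`⋆`-central series, i.e. the union of all its terms. -/
noncomputable def starHypercenter (A : Type u) [LeftBrace A] : Set A :=
  ⋃ o : Ordinal.{u}, zetaOrd A o

/-- `A` is `⋆`-hypercentral if `A = ζ_γ(⋆,A)` for some ordinal `γ`. -/
def IsStarHypercentral (A : Type u) [LeftBrace A] : Prop :=
  ∃ γ : Ordinal.{u}, zetaOrd A γ = (Set.univ : Set A)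

/-- `K ⋆ L`: the additive subgroup of `(A,+)` generated by all `x ⋆ y`, `x ∈ K`, `y ∈ L`. -/
def setStar (K L : Set A) : AddSubgroup A :=
  AddSubgroup.closure {z : A | ∃ x ∈ K, ∃ y ∈ L, z = bstar x y}

/-- `rightStarSeries A n = A^{(n+1)}`, where `A^{(1)} = A` and `A^{(n+1)} = A^{(n)} ⋆ A`. -/
def rightStarSeries (A : Type u) [LeftBrace A] : ℕ → Set A
  | 0 => (Set.univ : Set A)
  | n + 1 => ((setStar (rightStarSeries A n) (Set.univ : Set A) : AddSubgroup A) : Set A)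

/-- `leftStarSeries A n = A^{n+1}`, where `A^1 = A` and `A^{n+1} = A ⋆ A^n`. -/
def leftStarSeries (A : Type u) [LeftBrace A] : ℕ → Set A
  | 0 => (Set.univ : Set A)
  | n + 1 => ((setStar (Set.univ : Set A) (leftStarSeries A n) : AddSubgroup A) : Set A)

/-- `A` is Smoktunowicz-nilpotent if `A^{(n)} = A^k = 0` for some naturals `n, k`. -/
def IsSmoktunowiczNilpotent (A : Type u) [LeftBrace A] : Prop :=
  ∃ n k : ℕ, rightStarSeries A n = ({0} : Set A) ∧ leftStarSeries A k = ({0} : Set A)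

/-- The subbrace generated by a subset `M`: the intersection of all subbraces containing `M`. -/
def braceClosure (M : Set A) : Set A := ⋂₀ {S : Set A | IsSubbrace S ∧ M ⊆ S}

end LeftBrace


namespace LeftBrace
section Aux
variable {A : Type u} [LeftBrace A]

theorem brace_one_eq_zero : (1 : A) = 0 := by
  have h := mul_add_eq (1 : A) 0 0
  simp only [one_mul, add_zero] at h
  have h0 : (0 : A) - (0 - 1) = 0 := sub_eq_zero.mpr h
  have h1 : (1 : A) - 0 = 0 - (0 - 1) := by abel
  exact sub_eq_zero.mp (h1.trans h0)

theorem brace_mul_zero (x : A) : x * 0 = x := by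
  have h := mul_add_eq x 0 0
  rw [add_zero] at h
  have h0 : x * 0 - (x * 0 + x * 0 - x) = 0 := sub_eq_zero.mpr h
  have h1 : x * 0 - x = -(x * 0 - (x * 0 + x * 0 - x)) := by abel
  exact sub_eq_zero.mp (by rw [h1, h0, neg_zero])

theorem brace_zero_mul (x : A) : 0 * x = x := by
  rw [← brace_one_eq_zero, one_mul]

theorem bstar_zero (x : A) : bstar x 0 = 0 := by
  simp [bstar, brace_mul_zero]

theorem zero_bstar (x : A) : bstar 0 x = 0 := by
  simp [bstar, brace_zero_mul]

theorem bstar_add (x u v : A) : bstar x (u + v) = bstar x u + bstar x v := by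
  simp only [bstar, mul_add_eq]
  abel

/-- `bstar x` as an additive homomorphism. -/
def bstarHom (x : A) : A →+ A := AddMonoidHom.mk' (bstar x) (bstar_add x)

theorem bstar_zsmul (x : A) (n : ℤ) (y : A) : bstar x (n • y) = n • bstar x y :=
  map_zsmul (bstarHom x) n y

theorem bstar_neg (x y : A) : bstar x (-y) = - bstar x y :=
  map_neg (bstarHom x) y

theorem brace_mul_neg (x y : A) : x * (-y) = x + x - x * y := by
  have h := mul_add_eq x y (-y)
  rw [add_neg_cancel, brace_mul_zero] at h
  have h0 : x - (x * y + x * (-y) - x) = 0 := sub_eq_zero.mpr h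
  have h1 : x * (-y) - (x + x - x * y) = -(x - (x * y + x * (-y) - x)) := by abel
  exact sub_eq_zero.mp (by rw [h1, h0, neg_zero])

theorem mul_bstar (x y z : A) :
    bstar (x * y) z = bstar x (bstar y z) + bstar y z + bstar x z := by
  have expand : x * (y * z - y - z) = x * (y * z) - x * y - x * z + x + x := by
    have h1 : y * z - y - z = y * z + (-y + -z) := by abel
    rw [h1, mul_add_eq, mul_add_eq, brace_mul_neg, brace_mul_neg]
    abel
  simp only [bstar, expand, mul_assoc]
  abel


/-- The star center as an additive subgroup. -/
def starCenterAdd (A : Type u) [LeftBrace A] : AddSubgroup A where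
  carrier := starCenter A
  zero_mem' := by
    intro x
    exact ⟨zero_bstar x, bstar_zero x⟩
  add_mem' := by
    intro z w hz hw x
    constructor
    · have hzw : bstar z w = 0 := (hz w).1
      have h1 : z + w = z * w - bstar z w := by simp only [bstar]; abel
      rw [h1, hzw, sub_zero, mul_bstar, (hz x).1, (hw x).1, bstar_zero]
      abel
    · rw [bstar_add, (hz x).2, (hw x).2, add_zero]
  neg_mem' := by
    intro z hz x
    constructor
    · have h1 : bstar (-z + z) x = bstar (-z) (bstar z x) + bstar z x + bstar (-z) x := by
        have h2 : -z + z = (-z) * z - bstar (-z) z := by simp only [bstar]; abel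
        rw [h2, (hz (-z)).2, sub_zero, mul_bstar]
      rw [neg_add_cancel, zero_bstar, (hz x).1, bstar_zero] at h1
      have := h1.symm
      simpa using this
    · rw [bstar_neg, (hz x).2, neg_zero]

theorem starCenter_zsmul_mem {z : A} (hz : z ∈ starCenter A) (n : ℤ) :
    n • z ∈ starCenter A :=
  zsmul_mem (show z ∈ starCenterAdd A from hz) n

theorem bstar_central_right {z x : A} (hz : z ∈ starCenter A) : bstar x z = 0 :=
  (hz x).2

theorem bstar_central_left {z x : A} (hz : z ∈ starCenter A) : bstar z x = 0 :=
  (hz x).1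

/-- Shifting the left argument of `⋆` by a central element does not change it. -/
theorem bstar_shift {z : A} (hz : z ∈ starCenter A) (y x : A) :
    bstar (y + z) x = bstar y x := by
  have h2 : y + z = y * z - bstar y z := by simp only [bstar]; abel
  rw [h2, bstar_central_right hz, sub_zero, mul_bstar, bstar_central_left hz,
    bstar_zero, zero_add, zero_add]

theorem add_bstar {x y : A} (h : bstar x y ∈ starCenter A) (w : A) :
    bstar (x + y) w = bstar x (bstar y w) + bstar y w + bstar x w := by
  have hneg : -(bstar x y) ∈ starCenter A := neg_mem (show _ ∈ starCenterAdd A from h)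
  have h2 : x + y = x * y + -(bstar x y) := by simp only [bstar]; abel
  rw [h2, bstar_shift hneg, mul_bstar]

theorem neg_bstar_of_central {a : A} (hA : ∀ x, bstar a x ∈ starCenter A) (x : A) :
    bstar (-a) x = -(bstar a x) := by
  have h1 : bstar (a⁻¹ * a) x = bstar a⁻¹ (bstar a x) + bstar a x + bstar a⁻¹ x :=
    mul_bstar _ _ _
  rw [inv_mul_cancel, brace_one_eq_zero, zero_bstar,
    bstar_central_right (hA x)] at h1
  have hinv : bstar a⁻¹ x = -(bstar a x) := by
    have h2 : (0 : A) - bstar a x = (0 + bstar a x + bstar a⁻¹ x) - bstar a x := by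
      rw [← h1]
    rw [zero_sub] at h2
    rw [h2]; abel
  have h3 : bstar a a⁻¹ ∈ starCenter A := hA a⁻¹
  have h4 : -a = a⁻¹ + bstar a a⁻¹ := by
    simp only [bstar]
    rw [mul_inv_cancel, brace_one_eq_zero]
    abel
  rw [h4, bstar_shift h3, hinv]

theorem zsmul_bstar_of_central {a : A} (hA : ∀ x, bstar a x ∈ starCenter A)
    (n : ℤ) (x : A) : bstar (n • a) x = n • bstar a x := by
  induction n using Int.induction_on with
  | zero => simp [zero_bstar]
  | succ k ih =>
      have hk : ((k : ℤ) + 1) • a = a + (k : ℤ) • a := by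
        rw [add_zsmul, one_zsmul, add_comm]
      have hcent : bstar a ((k : ℤ) • a) ∈ starCenter A := by
        rw [bstar_zsmul]
        exact starCenter_zsmul_mem (hA a) _
      rw [hk, add_bstar hcent, ih,
        bstar_central_right (starCenter_zsmul_mem (hA x) k)]
      rw [add_zsmul, one_zsmul]
      abel
  | pred k ih =>
      have hk : (-(k : ℤ) - 1) • a = (-a) + (-(k : ℤ)) • a := by
        rw [sub_zsmul, one_zsmul, neg_zsmul]
        abel
      have hcent : bstar (-a) ((-(k : ℤ)) • a) ∈ starCenter A := by
        have : bstar (-a) ((-(k : ℤ)) • a) = (-(k : ℤ)) • bstar (-a) a := bstar_zsmul _ _ _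
        rw [this, neg_bstar_of_central hA]
        exact starCenter_zsmul_mem (neg_mem (show bstar a a ∈ starCenterAdd A from hA a)) _
      have hacent : ∀ z ∈ starCenter A, bstar (-a) z = 0 := by
        intro z hz
        rw [neg_bstar_of_central hA, bstar_central_right hz, neg_zero]
      rw [hk, add_bstar hcent, ih, hacent _ (starCenter_zsmul_mem (hA x) _),
        neg_bstar_of_central hA]
      rw [sub_zsmul, one_zsmul]
      abel

end Aux
end LeftBrace

open LeftBrace in
/-- **Lemma.** Let `A` be a T-brace and `a ∈ ζ₂(⋆,A)` of infinite additive order.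
If the torsion subgroup of the additive group of `ζ(⋆,A)` is a `p`-group for some
prime `p`, then `a ⋆ a` has additive order at most `p`; in particular `p • (a ⋆ a) = 0`. -/
theorem addOrderOf_bstar_self_le_p
    {A : Type u} [LeftBrace A] (hT : IsTBrace A) (p : ℕ) (hp : p.Prime)
    (hpgrp : ∀ z ∈ starCenter A, IsOfFinAddOrder z → ∃ m : ℕ, p ^ m • z = 0)
    (a : A) (ha : a ∈ zetaNat A 2) (hord : ¬ IsOfFinAddOrder a) :
    addOrderOf (bstar a a) ≤ p ∧ p • bstar a a = 0 := by
  -- Notation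
  set b := bstar a a with hbdef
  set q : ℤ := (p : ℤ) with hqdef
  -- unpack `a ∈ ζ₂`
  have hz1 : zetaNat A 1 = starCenter A := by
    ext w
    simp [zetaNat, nextCenter, starCenter]
  have ha2 : ∀ x : A, bstar a x ∈ starCenter A ∧ bstar x a ∈ starCenter A := by
    intro x
    have := (ha x)
    rwa [show zetaNat A 1 = nextCenter A (zetaNat A 0) from rfl,
      show nextCenter A (zetaNat A 0) = zetaNat A 1 from rfl, hz1] at this
  have hA : ∀ x : A, bstar a x ∈ starCenter A := fun x => (ha2 x).1
  have hA' : ∀ x : A, bstar x a ∈ starCenter A := fun x => (ha2 x).2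
  have hbZ : b ∈ starCenter A := hA a
  have zsa : ∀ (n : ℤ) (x : A), bstar (n • a) x = n • bstar a x :=
    fun n x => zsmul_bstar_of_central hA n x
  -- the two auxiliary sets
  set J : Set A := {w : A | ∃ m : ℤ, ∃ z ∈ starCenter A, w = (m * q) • a + z} with hJdef
  set I : Set A := {w : A | ∃ m n : ℤ, w = (m * q) • a + (n * q ^ 2) • b} with hIdef
  -- computation lemmas
  have L1 : ∀ (m : ℤ) (z : A), z ∈ starCenter A → ∀ x : A,
      bstar ((m) • a + z) x = m • bstar a x := by
    intro m z hz x
    rw [bstar_shift hz, zsa]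
  have L2 : ∀ (x : A) (m : ℤ) (z : A), z ∈ starCenter A →
      bstar x ((m) • a + z) = m • bstar x a := by
    intro x m z hz
    rw [bstar_add, bstar_zsmul, bstar_central_right hz, add_zero]
  have hmul : ∀ u v : A, u * v = bstar u v + u + v := by
    intro u v; simp only [bstar]; abel
  -- J is a subbrace
  have hJsub : IsSubbrace J := by
    constructor
    · exact ⟨0, 0, (starCenterAdd A).zero_mem, by simp⟩
    · rintro u v ⟨m, z, hz, rfl⟩ ⟨m', z', hz', rfl⟩
      refine ⟨m + m', z + z', (starCenterAdd A).add_mem hz hz', ?_⟩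
      module
    · rintro u ⟨m, z, hz, rfl⟩
      refine ⟨-m, -z, (starCenterAdd A).neg_mem hz, ?_⟩
      module
    · rintro u v ⟨m, z, hz, rfl⟩ ⟨m', z', hz', rfl⟩
      refine ⟨m + m', z + z' + (m * m' * q ^ 2) • b, ?_, ?_⟩
      · exact (starCenterAdd A).add_mem ((starCenterAdd A).add_mem hz hz')
          (starCenter_zsmul_mem hbZ _)
      · rw [hmul, L2 _ _ _ hz', L1 _ _ hz a]
        module
    · rintro u ⟨m, z, hz, rfl⟩
      have hv : ((m * q) • a + z) * ((-m * q) • a + (-z + (m * m * q ^ 2) • b)) = 1 := by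
        have hzz : (-z + (m * m * q ^ 2) • b) ∈ starCenter A :=
          (starCenterAdd A).add_mem ((starCenterAdd A).neg_mem hz)
            (starCenter_zsmul_mem hbZ _)
        rw [hmul, L2 _ _ _ hzz, L1 _ _ hz a, brace_one_eq_zero]
        module
      refine ⟨-m, -z + (m * m * q ^ 2) • b,
        (starCenterAdd A).add_mem ((starCenterAdd A).neg_mem hz)
          (starCenter_zsmul_mem hbZ _), ?_⟩
      exact inv_eq_of_mul_eq_one_right hv
  -- I is a subbrace
  have hIsub : IsSubbrace I := by
    constructor
    · exact ⟨0, 0, by simp⟩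
    · rintro u v ⟨m, n, rfl⟩ ⟨m', n', rfl⟩
      exact ⟨m + m', n + n', by module⟩
    · rintro u ⟨m, n, rfl⟩
      exact ⟨-m, -n, by module⟩
    · rintro u v ⟨m, n, rfl⟩ ⟨m', n', rfl⟩
      refine ⟨m + m', n + n' + m * m', ?_⟩
      rw [hmul, L2 _ _ _ (starCenter_zsmul_mem hbZ _),
        L1 _ _ (starCenter_zsmul_mem hbZ _) a]
      module
    · rintro u ⟨m, n, rfl⟩
      have hv : ((m * q) • a + (n * q ^ 2) • b) *
          ((-m * q) • a + ((m * m - n) * q ^ 2) • b) = 1 := by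
        rw [hmul, L2 _ _ _ (starCenter_zsmul_mem hbZ _),
          L1 _ _ (starCenter_zsmul_mem hbZ _) a, brace_one_eq_zero]
        module
      exact ⟨-m, m * m - n, inv_eq_of_mul_eq_one_right hv⟩
  have hUniv : IsSubbrace (Set.univ : Set A) := by
    constructor <;> intros <;> exact Set.mem_univ _
  -- J is an ideal of A
  have hJideal : IsIdeal J := by
    refine ⟨Set.subset_univ _, hJsub, hUniv, ?_, ?_⟩
    · rintro x - w ⟨m, z, hz, rfl⟩
      refine ⟨0, (m * q) • bstar x a, starCenter_zsmul_mem (hA' x) _, ?_⟩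
      rw [L2 _ _ _ hz]
      module
    · rintro x - w ⟨m, z, hz, rfl⟩
      refine ⟨0, (m * q) • bstar a x, starCenter_zsmul_mem (hA x) _, ?_⟩
      rw [L1 _ _ hz]
      module
  -- I is an ideal of J
  have hIJ : IsIdealIn I J := by
    refine ⟨?_, hIsub, hJsub, ?_, ?_⟩
    · rintro w ⟨m, n, rfl⟩
      exact ⟨m, (n * q ^ 2) • b, starCenter_zsmul_mem hbZ _, rfl⟩
    · rintro x ⟨l, z, hz, rfl⟩ w ⟨m, n, rfl⟩
      refine ⟨0, m * l, ?_⟩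
      rw [L2 _ _ _ (starCenter_zsmul_mem hbZ _), L1 _ _ hz a]
      module
    · rintro x ⟨l, z, hz, rfl⟩ w ⟨m, n, rfl⟩
      refine ⟨0, m * l, ?_⟩
      rw [L2 _ _ _ hz, L1 _ _ (starCenter_zsmul_mem hbZ _) a]
      module
  -- by the T-property, I is an ideal of A
  have hIideal : IsIdeal I := hT I J hIJ hJideal
  -- hence `a ⋆ (p • a) = p • b ∈ I`
  have hpaI : ((1 : ℤ) * q) • a + ((0 : ℤ) * q ^ 2) • b ∈ I := ⟨1, 0, rfl⟩
  have hkey : ∃ m n : ℤ, q • b = (m * q) • a + (n * q ^ 2) • b := by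
    have h := hIideal.star_mem_left a (Set.mem_univ a) _ hpaI
    rwa [L2 _ _ _ (starCenter_zsmul_mem hbZ _), one_mul] at h
  obtain ⟨m, n, hmn⟩ := hkey
  -- arithmetic helpers
  have hinf : ∀ k : ℤ, k • a = 0 → k = 0 := by
    intro k hk
    by_contra hk0
    apply hord
    refine isOfFinAddOrder_iff_nsmul_eq_zero.mpr ⟨k.natAbs, Int.natAbs_pos.mpr hk0, ?_⟩
    rcases Int.natAbs_eq k with h | h
    · rw [← natCast_zsmul, ← h, hk]
    · rw [← natCast_zsmul, show ((k.natAbs : ℤ)) = -k by conv_rhs => rw [h, neg_neg], neg_zsmul, hk, neg_zero]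
  have hzabs : ∀ (t : ℤ) (c : A), t • c = 0 → t.natAbs • c = 0 := by
    intro t c htc
    rcases Int.natAbs_eq t with h | h
    · rw [← natCast_zsmul, ← h, htc]
    · rw [← natCast_zsmul, show ((t.natAbs : ℤ)) = -t by conv_rhs => rw [h, neg_neg], neg_zsmul, htc, neg_zero]
  have hrel : ∀ r s : ℤ, r • a = s • b → r • b = 0 := by
    intro r s hrs
    have : r • b = bstar a (r • a) := by rw [bstar_zsmul]
    rw [this, hrs, bstar_zsmul, bstar_central_right hbZ, smul_zero]
  -- rearrange hmn
  have hra : (m * q) • a = (q - n * q ^ 2) • b := by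
    have : (q - n * q ^ 2) • b = q • b - (n * q ^ 2) • b := by module
    rw [this, hmn]; module
  have hmb : (m * q) • b = 0 := hrel _ _ hra
  have hm0 : m * q = 0 := by
    have h2 : (m * q * (m * q)) • a = 0 := by
      rw [mul_zsmul, hra, smul_comm, hmb, smul_zero]
    have := hinf _ h2
    exact mul_self_eq_zero.mp this
  have hq0 : q ≠ 0 := by
    simp only [hqdef]
    exact_mod_cast hp.ne_zero
  have ht : (q - n * q ^ 2) • b = 0 := by
    rw [← hra, hm0, zero_zsmul]
  have htfac : q - n * q ^ 2 = q * (1 - n * q) := by ring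
  have htne : q - n * q ^ 2 ≠ 0 := by
    rw [htfac]
    intro h
    rcases mul_eq_zero.mp h with h1 | h1
    · exact hq0 h1
    · have h2 : (q : ℤ) ∣ 1 := ⟨n, by linarith⟩
      have h3 : (q : ℤ) ≤ 1 := Int.le_of_dvd one_pos h2
      have h4 : (2 : ℤ) ≤ q := by rw [hqdef]; exact_mod_cast hp.two_le
      omega
  have hfb : IsOfFinAddOrder b :=
    isOfFinAddOrder_iff_nsmul_eq_zero.mpr
      ⟨(q - n * q ^ 2).natAbs, Int.natAbs_pos.mpr htne, hzabs _ _ ht⟩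
  obtain ⟨e, hpe⟩ := hpgrp b hbZ hfb
  set d := addOrderOf b with hddef
  have hd1 : d ∣ p ^ e := addOrderOf_dvd_of_nsmul_eq_zero hpe
  set u : ℕ := ((1 : ℤ) - n * q).natAbs with hudef
  have habs : (q - n * q ^ 2).natAbs = p * u := by
    rw [htfac, Int.natAbs_mul, hudef, hqdef, Int.natAbs_natCast]
  have hd2 : d ∣ p * u := by
    rw [← habs]
    exact addOrderOf_dvd_of_nsmul_eq_zero (hzabs _ _ ht)
  have hcop : Nat.Coprime p u := by
    rw [hp.coprime_iff_not_dvd]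
    intro hdvd
    have h1 : (p : ℤ) ∣ (1 - n * q) := by
      rw [← Int.natAbs_dvd_natAbs, Int.natAbs_natCast]
      exact hdvd
    have h2 : (p : ℤ) ∣ 1 := by
      have h3 : (p : ℤ) ∣ n * q := ⟨n, by rw [hqdef]; ring⟩
      have h4 : (1 : ℤ) = (1 - n * q) + n * q := by ring
      rw [h4]
      exact dvd_add h1 h3
    have h3 : (p : ℤ) ≤ 1 := Int.le_of_dvd one_pos h2
    have h4 : (2 : ℤ) ≤ (p : ℤ) := by exact_mod_cast hp.two_le
    omega
  obtain ⟨i, hie, hdi⟩ := (Nat.dvd_prime_pow hp).mp hd1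
  have hdp : d ∣ p := by
    have hcop' : Nat.Coprime (p ^ i) u := Nat.Coprime.pow_left i hcop
    rw [hdi] at hd2 ⊢
    exact hcop'.dvd_of_dvd_mul_right hd2
  exact ⟨Nat.le_of_dvd hp.pos hdp, addOrderOf_dvd_iff_nsmul_eq_zero.mp hdp⟩
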